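/- Let W ⊆ ℝ^d be convex, let f : W × Z → ℝ be such that f(·, z) is convex and G-Lipschitz with respect to the Euclidean norm for every z ∈ Z, and let Ψ : W → ℝ be α-strongly convex with respect to the Euclidean norm. For S = (z_1, …, z_m) define R(S) = argmin_{w ∈ W} { (1/m) Σ_{i=1}^m f(w, z_i) + λ Ψ(w) } with λ > 0, and let S^{(−m)} = (z_1, …, z_{m−1}) with corresponding minimizer R(S^{(−m)}) = argmin_{w ∈ W} { (1/(m)) Σ_{i=1}^{m−1} f(w, z_i) + λ Ψ(w) } of the leave-one-out regularized objective. Then ‖ R(S^{(−m)}) − R(S) ‖_2 ≤ G / (α m λ). -/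

import Mathlib

private lemma convexOn_finsum {d : ℕ} {ι : Type*} (t : Finset ι)
    {W : Set (EuclideanSpace ℝ (Fin d))} (hW : Convex ℝ W)
    (g : ι → EuclideanSpace ℝ (Fin d) → ℝ) (hg : ∀ i, ConvexOn ℝ W (g i)) :
    ConvexOn ℝ W (fun w => ∑ i ∈ t, g i w) := by
  classical
  induction t using Finset.induction with
  | empty => simpa using convexOn_const 0 hW
  | insert a s hnot ih =>
      have e : (fun w => ∑ i ∈ insert a s, g i w) = g a + fun w => ∑ i ∈ s, g i w := by
        funext w; simp [Finset.sum_insert hnot]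
      rw [e]; exact (hg _).add ih

/-- Strong-convexity lower bound at a constrained minimizer of `g + lam • Ψ`. -/
private lemma aux_min {d : ℕ} {W : Set (EuclideanSpace ℝ (Fin d))}
    {g Ψ : EuclideanSpace ℝ (Fin d) → ℝ} {α lam : ℝ}
    (hα : 0 < α) (hlam : 0 < lam)
    (hg : ConvexOn ℝ W g) (hΨ : StrongConvexOn W α Ψ)
    {x : EuclideanSpace ℝ (Fin d)} (hx : x ∈ W)
    (hmin : ∀ w ∈ W, g x + lam * Ψ x ≤ g w + lam * Ψ w) :
    ∀ w ∈ W, g x + lam * Ψ x + lam * (α / 2) * ‖w - x‖ ^ 2 ≤ g w + lam * Ψ w := by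
  intro w hw
  set K : ℝ := lam * (α / 2) * ‖w - x‖ ^ 2 with hK
  set D : ℝ := (g w + lam * Ψ w) - (g x + lam * Ψ x) with hDdef
  have hD : 0 ≤ D := by have := hmin w hw; simp only [hDdef]; linarith
  have key : ∀ t : ℝ, 0 < t → t < 1 → (1 - t) * K ≤ D := by
    intro t ht0 ht1
    have ha : (0:ℝ) ≤ 1 - t := by linarith
    have hb : (0:ℝ) ≤ t := le_of_lt ht0
    have hab : (1 - t) + t = 1 := by ring
    have hyW : (1 - t) • x + t • w ∈ W := hΨ.1 hx hw ha hb hab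
    have h1 := hmin _ hyW
    have h2 := hg.2 hx hw ha hb hab
    have h3 := hΨ.2 hx hw ha hb hab
    have hnorm : ‖x - w‖ = ‖w - x‖ := norm_sub_rev x w
    rw [hnorm] at h3
    simp only [smul_eq_mul] at h2 h3
    ring_nf at h3
    have h4 : g x + lam * Ψ x ≤
        ((1 - t) * g x + t * g w) + lam * ((1 - t) * Ψ x + t * Ψ w
          - (1 - t) * t * (α / 2 * ‖w - x‖ ^ 2)) := by
      calc g x + lam * Ψ x ≤ g ((1 - t) • x + t • w) + lam * Ψ ((1 - t) • x + t • w) := h1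
        _ ≤ ((1 - t) * g x + t * g w) + lam * ((1 - t) * Ψ x + t * Ψ w
              - (1 - t) * t * (α / 2 * ‖w - x‖ ^ 2)) := by
            have := mul_le_mul_of_nonneg_left h3 (le_of_lt hlam)
            linarith
    have hmul : t * ((1 - t) * K) ≤ t * D := by
      simp only [hK, hDdef]; nlinarith
    exact le_of_mul_le_mul_left hmul ht0
  have hfin : K ≤ D := by
    by_contra h
    push_neg at h
    have hK0 : 0 < K := lt_of_le_of_lt hD h
    have ht0 : 0 < (K - D) / (2 * K) := div_pos (by linarith) (by linarith)
    have ht1 : (K - D) / (2 * K) < 1 := by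
      rw [div_lt_one (by positivity)]; linarith
    have hk := key _ ht0 ht1
    have hKD : (1 - (K - D) / (2 * K)) * K = K - (K - D) / 2 := by
      field_simp
    rw [hKD] at hk
    linarith
  simp only [hK, hDdef] at hfin ⊢; linarith

/-- Leave-one-out stability of regularized ERM in parameter space: if `f(·, z)` is
convex and `G`-Lipschitz on the convex set `W` for every `z`, and `Ψ` is `α`-strongly
convex on `W`, then the regularized ERM on the full sample and the regularized ERM on
the sample with the last point left out (same normalization `1/m`) are within Euclidean
distance `G/(αmλ)`. Here `m = n+1`. -/
theorem rerm_leave_one_out_stability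
    {d : ℕ} {Z : Type*} (n : ℕ)
    (W : Set (EuclideanSpace ℝ (Fin d))) (hW : Convex ℝ W)
    (f : EuclideanSpace ℝ (Fin d) → Z → ℝ)
    (G : ℝ) (hG : 0 ≤ G)
    (hconv : ∀ z, ConvexOn ℝ W fun w => f w z)
    (hlip : ∀ z, ∀ w ∈ W, ∀ w' ∈ W, |f w z - f w' z| ≤ G * ‖w - w'‖)
    (Ψ : EuclideanSpace ℝ (Fin d) → ℝ)
    (α : ℝ) (hα : 0 < α) (hΨ : StrongConvexOn W α Ψ)
    (lam : ℝ) (hlam : 0 < lam)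
    (S : Fin (n + 1) → Z)
    (RS RSm : EuclideanSpace ℝ (Fin d))
    (hRS : RS ∈ W ∧ ∀ w ∈ W,
      (1 / (n + 1) : ℝ) * ∑ i, f RS (S i) + lam * Ψ RS ≤
        (1 / (n + 1) : ℝ) * ∑ i, f w (S i) + lam * Ψ w)
    (hRSm : RSm ∈ W ∧ ∀ w ∈ W,
      (1 / (n + 1) : ℝ) * ∑ i : Fin n, f RSm (S i.castSucc) + lam * Ψ RSm ≤
        (1 / (n + 1) : ℝ) * ∑ i : Fin n, f w (S i.castSucc) + lam * Ψ w) :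
    ‖RSm - RS‖ ≤ G / (α * (n + 1) * lam) := by
  have hm : (0:ℝ) < (n : ℝ) + 1 := by positivity
  set g1 : EuclideanSpace ℝ (Fin d) → ℝ :=
    fun w => (1 / (n + 1) : ℝ) * ∑ i, f w (S i) with hg1
  set g2 : EuclideanSpace ℝ (Fin d) → ℝ :=
    fun w => (1 / (n + 1) : ℝ) * ∑ i : Fin n, f w (S i.castSucc) with hg2
  have hg1c : ConvexOn ℝ W g1 :=
    (convexOn_finsum Finset.univ hW (fun i w => f w (S i)) (fun i => hconv (S i))).smul
      (by positivity)
  have hg2c : ConvexOn ℝ W g2 :=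
    (convexOn_finsum Finset.univ hW (fun (i : Fin n) w => f w (S i.castSucc))
      (fun i => hconv _)).smul (by positivity)
  have h1 := aux_min hα hlam hg1c hΨ hRS.1 hRS.2 RSm hRSm.1
  have h2 := aux_min hα hlam hg2c hΨ hRSm.1 hRSm.2 RS hRS.1
  rw [norm_sub_rev RS RSm] at h2
  have hsplit : ∀ w, g1 w = g2 w + (1 / (n + 1) : ℝ) * f w (S (Fin.last n)) := by
    intro w
    simp only [hg1, hg2, Fin.sum_univ_castSucc]
    ring
  have hlipb := hlip (S (Fin.last n)) RSm hRSm.1 RS hRS.1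
  have habs : f RSm (S (Fin.last n)) - f RS (S (Fin.last n)) ≤ G * ‖RSm - RS‖ :=
    le_trans (le_abs_self _) hlipb
  have hmain : lam * α * ‖RSm - RS‖ ^ 2 ≤ (1 / (n + 1) : ℝ) * (G * ‖RSm - RS‖) := by
    have e1 := hsplit RS
    have e2 := hsplit RSm
    have hcoef : (0:ℝ) ≤ (1 / (n + 1) : ℝ) := by positivity
    nlinarith [mul_le_mul_of_nonneg_left habs hcoef]
  rcases eq_or_lt_of_le (norm_nonneg (RSm - RS)) with hz | hz
  · rw [← hz]; positivity
  · rw [le_div_iff₀ (by positivity)]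
    have hstep : lam * α * ‖RSm - RS‖ * ‖RSm - RS‖ ≤
        (1 / (n + 1) : ℝ) * G * ‖RSm - RS‖ := by nlinarith
    have h := le_of_mul_le_mul_right hstep hz
    rw [div_mul_eq_mul_div, le_div_iff₀ hm] at h
    nlinarith
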